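/- Let Δ be simply-laced, α a simple root, and γ a positive root with γ ≽ α and with the coefficient of α in γ equal to 1. Then the inversion set of the minimal-length element w_{γ,α} taking γ to α equals {μ ∈ Δ⁺ | [μ:α] = 0 and γ − μ ∈ Δ⁺}, where [μ:α] denotes the coefficient of α in μ. -/

import Mathlib

open scoped RealInnerProductSpace

/-- Data of a crystallographic root system in a real inner product space `V`,
with simple roots indexed by a finite type `ι`. -/
structure RSD (ι V : Type*) [Fintype ι] [NormedAddCommGroup V]
    [InnerProductSpace ℝ V] where
  /-- The simple roots. -/
  sroot : ι → V
  /-- The set of roots. -/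
  Δ : Set V
  finite : Δ.Finite
  zero_not_mem : (0 : V) ∉ Δ
  sroot_mem : ∀ i, sroot i ∈ Δ
  sroot_indep : LinearIndependent ℝ sroot
  neg_mem : ∀ a ∈ Δ, -a ∈ Δ
  /-- Crystallographic condition. -/
  crys : ∀ a ∈ Δ, ∀ b ∈ Δ, ∃ n : ℤ, 2 * ⟪a, b⟫ / ⟪a, a⟫ = (n : ℝ)
  /-- The reflection associated with a vector (only specified on roots). -/
  reflect : V → (V ≃ₗ[ℝ] V)
  reflect_apply : ∀ a ∈ Δ, ∀ v : V,
    reflect a v = v - (2 * ⟪a, v⟫ / ⟪a, a⟫) • a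
  reflect_root_mem : ∀ a ∈ Δ, ∀ b ∈ Δ, reflect a b ∈ Δ
  /-- Every root is a nonnegative or nonpositive integral combination of simple roots. -/
  decomp : ∀ a ∈ Δ, (∃ c : ι → ℕ, a = ∑ i, (c i : ℝ) • sroot i) ∨
      (∃ c : ι → ℕ, a = -∑ i, (c i : ℝ) • sroot i)
  /-- Irreducibility. -/
  irred : ∀ S T : Set V, S ∪ T = Δ → (∀ a ∈ S, ∀ b ∈ T, ⟪a, b⟫ = 0) →
      S = ∅ ∨ T = ∅

namespace RSD

variable {ι V : Type*} [Fintype ι] [NormedAddCommGroup V] [InnerProductSpace ℝ V]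
  (R : RSD ι V)

/-- The set of positive roots. -/
def pos : Set V := {a ∈ R.Δ | ∃ c : ι → ℕ, a = ∑ i, (c i : ℝ) • R.sroot i}

/-- `R.le μ γ` means `μ ≼ γ`, i.e. `γ - μ` is a nonnegative integral combination
of simple roots. -/
def le (μ γ : V) : Prop := ∃ c : ι → ℕ, γ - μ = ∑ i, (c i : ℝ) • R.sroot i

/-- The Weyl group, generated by the simple reflections. -/
def W : Subgroup (V ≃ₗ[ℝ] V) :=
  Subgroup.closure (Set.range fun i => R.reflect (R.sroot i))

/-- The inversion set `N(w) = {γ ∈ Δ⁺ ∣ w γ ∈ -Δ⁺}`. -/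
def N (w : V ≃ₗ[ℝ] V) : Set V := {γ ∈ R.pos | -(w γ) ∈ R.pos}

/-- The length of `w`: minimal length of an expression of `w` as a product of
simple reflections. -/
noncomputable def len (w : V ≃ₗ[ℝ] V) : ℕ :=
  sInf {n | ∃ l : List ι, l.length = n ∧
    (l.map fun i => R.reflect (R.sroot i)).prod = w}

/-- The coroot `a∨ = 2a/(a,a)`. -/
@[nolint unusedArguments]
noncomputable def coroot (_R : RSD ι V) (a : V) : V := (2 / ⟪a, a⟫) • a

/-- `ρ`, the half-sum of the positive roots. -/
noncomputable def rho : V :=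
  (2⁻¹ : ℝ) • ∑ a ∈ (R.finite.subset (fun a ha => ha.1 : R.pos ⊆ R.Δ)).toFinset, a

/-- `R.HtIs γ n` : the height of `γ` is `n`. -/
def HtIs (γ : V) (n : ℕ) : Prop :=
  ∃ c : ι → ℕ, γ = ∑ i, (c i : ℝ) • R.sroot i ∧ ∑ i, c i = n

/-- A long root: a root of maximal squared length. -/
def IsLong (γ : V) : Prop := γ ∈ R.Δ ∧ ∀ b ∈ R.Δ, ⟪b, b⟫ ≤ ⟪γ, γ⟫

/-- The highest root. -/
def IsHighest (θ : V) : Prop := θ ∈ R.pos ∧ ∀ γ ∈ R.pos, R.le γ θ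

/-- Simply-laced: all roots have the same length. -/
def SimplyLaced : Prop := ∀ a ∈ R.Δ, ∀ b ∈ R.Δ, ⟪a, a⟫ = ⟪b, b⟫

/-- A minimal inversion complete set. -/
def IsMICS (F : Set (V ≃ₗ[ℝ] V)) : Prop :=
  (∀ w ∈ F, w ∈ R.W) ∧ (⋃ w ∈ F, R.N w) = R.pos ∧
    ∀ F' ⊂ F, (⋃ w ∈ F', R.N w) ≠ R.pos

end RSD

namespace RSD

variable {ι V : Type*} [Fintype ι] [NormedAddCommGroup V] [InnerProductSpace ℝ V]
  (R : RSD ι V)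

@[simp] lemma mul_apply' (u v : V ≃ₗ[ℝ] V) (x : V) : (u * v) x = u (v x) := rfl
@[simp] lemma one_apply' (x : V) : (1 : V ≃ₗ[ℝ] V) x = x := rfl

lemma root_ne_zero {a : V} (ha : a ∈ R.Δ) : a ≠ 0 := fun h => R.zero_not_mem (h ▸ ha)

lemma root_inner_self_pos {a : V} (ha : a ∈ R.Δ) : 0 < ⟪a, a⟫ :=
  lt_of_le_of_ne real_inner_self_nonneg
    (Ne.symm ((@inner_self_ne_zero ℝ _ _ _ _ a).mpr (R.root_ne_zero ha)))

lemma reflect_self {a : V} (ha : a ∈ R.Δ) : R.reflect a a = -a := by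
  have h := (R.root_inner_self_pos ha).ne'
  rw [R.reflect_apply a ha a]
  have h2 : 2 * ⟪a, a⟫ / ⟪a, a⟫ = 2 := by field_simp
  rw [h2, two_smul]
  abel

lemma reflect_reflect {a : V} (ha : a ∈ R.Δ) (v : V) :
    R.reflect a (R.reflect a v) = v := by
  have h0 := (R.root_inner_self_pos ha).ne'
  rw [R.reflect_apply a ha v, R.reflect_apply a ha]
  rw [inner_sub_right, real_inner_smul_right]
  have h2 : 2 * (⟪a, v⟫ - 2 * ⟪a, v⟫ / ⟪a, a⟫ * ⟪a, a⟫) / ⟪a, a⟫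
      = -(2 * ⟪a, v⟫ / ⟪a, a⟫) := by field_simp; ring
  rw [h2, neg_smul, sub_neg_eq_add, sub_add_cancel]

lemma reflect_sq {a : V} (ha : a ∈ R.Δ) : R.reflect a * R.reflect a = 1 :=
  LinearEquiv.ext fun v => R.reflect_reflect ha v

lemma reflect_inner {a : V} (ha : a ∈ R.Δ) (x y : V) :
    ⟪R.reflect a x, R.reflect a y⟫ = ⟪x, y⟫ := by
  have h0 := (R.root_inner_self_pos ha).ne'
  rw [R.reflect_apply a ha x, R.reflect_apply a ha y]
  simp only [inner_sub_left, inner_sub_right, real_inner_smul_left, real_inner_smul_right]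
  rw [real_inner_comm x a]
  field_simp
  ring

/-- Product of the word `l` of simple reflections. -/
def wp (l : List ι) : V ≃ₗ[ℝ] V := (l.map fun k => R.reflect (R.sroot k)).prod

@[simp] lemma wp_nil : R.wp ([] : List ι) = 1 := rfl

lemma wp_cons (k : ι) (l : List ι) :
    R.wp (k :: l) = R.reflect (R.sroot k) * R.wp l := by simp [wp]

lemma wp_append (l₁ l₂ : List ι) : R.wp (l₁ ++ l₂) = R.wp l₁ * R.wp l₂ := by
  simp [wp]

lemma wp_concat (l : List ι) (k : ι) :
    R.wp (l.concat k) = R.wp l * R.reflect (R.sroot k) := by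
  simp [wp]

lemma sreflect_mem_W (k : ι) : R.reflect (R.sroot k) ∈ R.W :=
  Subgroup.subset_closure ⟨k, rfl⟩

lemma wp_mem_W (l : List ι) : R.wp l ∈ R.W := by
  induction l with
  | nil => exact one_mem _
  | cons k l ih => rw [wp_cons]; exact mul_mem (R.sreflect_mem_W k) ih

lemma sreflect_inv (k : ι) :
    (R.reflect (R.sroot k))⁻¹ = R.reflect (R.sroot k) :=
  inv_eq_of_mul_eq_one_right (R.reflect_sq (R.sroot_mem k))

lemma wp_reverse (l : List ι) : R.wp l.reverse = (R.wp l)⁻¹ := by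
  induction l with
  | nil => simp
  | cons k l ih =>
      rw [List.reverse_cons, ← List.concat_eq_append, wp_concat, ih, wp_cons,
        mul_inv_rev, sreflect_inv]

lemma W_word {w : V ≃ₗ[ℝ] V} (hw : w ∈ R.W) : ∃ l : List ι, R.wp l = w := by
  induction hw using Subgroup.closure_induction with
  | mem x hx => obtain ⟨k, rfl⟩ := hx; exact ⟨[k], by simp [wp]⟩
  | one => exact ⟨[], rfl⟩
  | mul x y _ _ hx hy =>
      obtain ⟨l₁, rfl⟩ := hx; obtain ⟨l₂, rfl⟩ := hy
      exact ⟨l₁ ++ l₂, R.wp_append l₁ l₂⟩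
  | inv x _ hx =>
      obtain ⟨l, rfl⟩ := hx
      exact ⟨l.reverse, R.wp_reverse l⟩

lemma wp_inner (l : List ι) (x y : V) : ⟪R.wp l x, R.wp l y⟫ = ⟪x, y⟫ := by
  induction l generalizing x y with
  | nil => simp
  | cons k l ih =>
      rw [wp_cons, mul_apply', mul_apply',
        R.reflect_inner (R.sroot_mem k) (R.wp l x) (R.wp l y)]
      exact ih x y

lemma wp_root (l : List ι) {x : V} (hx : x ∈ R.Δ) : R.wp l x ∈ R.Δ := by
  induction l generalizing x with
  | nil => simpa
  | cons k l ih =>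
      rw [wp_cons, mul_apply']
      exact R.reflect_root_mem _ (R.sroot_mem k) _ (ih hx)

lemma W_inner {w : V ≃ₗ[ℝ] V} (hw : w ∈ R.W) (x y : V) : ⟪w x, w y⟫ = ⟪x, y⟫ := by
  obtain ⟨l, rfl⟩ := R.W_word hw
  exact R.wp_inner l x y

lemma W_root {w : V ≃ₗ[ℝ] V} (hw : w ∈ R.W) {x : V} (hx : x ∈ R.Δ) : w x ∈ R.Δ := by
  obtain ⟨l, rfl⟩ := R.W_word hw
  exact R.wp_root l hx

lemma reflect_conj {w : V ≃ₗ[ℝ] V} (hw : w ∈ R.W) {a : V} (ha : a ∈ R.Δ) :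
    R.reflect (w a) * w = w * R.reflect a := by
  have hwa : w a ∈ R.Δ := R.W_root hw ha
  refine LinearEquiv.ext fun x => ?_
  rw [mul_apply', mul_apply', R.reflect_apply _ hwa, R.reflect_apply a ha, map_sub,
    map_smul, R.W_inner hw a x, R.W_inner hw a a]

end RSD
namespace RSD

variable {ι V : Type*} [Fintype ι] [NormedAddCommGroup V] [InnerProductSpace ℝ V]
  (R : RSD ι V)

/-- The coefficient functionals dual to the simple roots. -/
noncomputable def cf (k : ι) : V →ₗ[ℝ] ℝ :=
  haveI : FiniteDimensional ℝ (Submodule.span ℝ (Set.range R.sroot)) :=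
    FiniteDimensional.span_of_finite ℝ (Set.finite_range _)
  ((Module.Basis.span R.sroot_indep).coord k).comp
    (Submodule.orthogonalProjectionOnto (Submodule.span ℝ (Set.range R.sroot))).toLinearMap

lemma cf_sroot_repr (k j : ι) :
    R.cf k (R.sroot j) = (Finsupp.single j (1:ℝ)) k := by
  haveI : FiniteDimensional ℝ (Submodule.span ℝ (Set.range R.sroot)) :=
    FiniteDimensional.span_of_finite ℝ (Set.finite_range _)
  have hmem : R.sroot j ∈ Submodule.span ℝ (Set.range R.sroot) :=
    Submodule.subset_span ⟨j, rfl⟩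
  have hbj : (Module.Basis.span R.sroot_indep) j = ⟨R.sroot j, hmem⟩ :=
    Module.Basis.span_apply R.sroot_indep j
  show (Module.Basis.span R.sroot_indep).coord k
      (Submodule.orthogonalProjectionOnto _ (R.sroot j)) = _
  have hproj : Submodule.orthogonalProjectionOnto (Submodule.span ℝ (Set.range R.sroot)) (R.sroot j)
      = ⟨R.sroot j, hmem⟩ :=
    Submodule.orthogonalProjectionOnto_mem_subspace_eq_self
      (⟨R.sroot j, hmem⟩ : Submodule.span ℝ (Set.range R.sroot))
  rw [hproj, ← hbj, Module.Basis.coord_apply, Module.Basis.repr_self]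

lemma cf_sroot_self (k : ι) : R.cf k (R.sroot k) = 1 := by
  rw [cf_sroot_repr, Finsupp.single_eq_same]

lemma cf_sroot_ne {k j : ι} (h : j ≠ k) : R.cf k (R.sroot j) = 0 := by
  rw [cf_sroot_repr, Finsupp.single_eq_of_ne' h]

lemma cf_coeff (c : ι → ℝ) (k : ι) : R.cf k (∑ j, c j • R.sroot j) = c k := by
  rw [map_sum]
  rw [Finset.sum_eq_single k
    (fun j _ hj => by rw [map_smul, R.cf_sroot_ne hj, smul_eq_mul, mul_zero])
    (fun h => absurd (Finset.mem_univ k) h)]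
  rw [map_smul, R.cf_sroot_self, smul_eq_mul, mul_one]

lemma cf_coeffN {x : V} {c : ι → ℕ} (h : x = ∑ j, (c j : ℝ) • R.sroot j) (k : ι) :
    R.cf k x = c k := by rw [h]; exact R.cf_coeff _ k

lemma root_eq_sum_cf {x : V} (hx : x ∈ R.Δ) : x = ∑ k, R.cf k x • R.sroot k := by
  rcases R.decomp x hx with ⟨c, hc⟩ | ⟨c, hc⟩
  · nth_rewrite 1 [hc]
    exact Finset.sum_congr rfl fun k _ => by rw [R.cf_coeffN hc k]
  · have hc' : x = ∑ j, (-(c j : ℝ)) • R.sroot j := by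
      rw [hc, ← Finset.sum_neg_distrib]
      exact Finset.sum_congr rfl fun k _ => (neg_smul _ _).symm
    nth_rewrite 1 [hc']
    refine Finset.sum_congr rfl fun k _ => ?_
    rw [hc'] ; rw [R.cf_coeff]

lemma cf_nonneg_of_pos {x : V} (hx : x ∈ R.pos) (k : ι) : 0 ≤ R.cf k x := by
  obtain ⟨-, c, hc⟩ := hx
  rw [R.cf_coeffN hc k]
  exact Nat.cast_nonneg _

lemma not_pos_neg {x : V} (hx : x ∈ R.pos) (h : -x ∈ R.pos) : False := by
  obtain ⟨hxΔ, c, hc⟩ := hx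
  obtain ⟨-, c', hc'⟩ := h
  have hzero : (0 : V) = ∑ j, ((c j : ℝ) + (c' j : ℝ)) • R.sroot j := by
    have : x + -x = 0 := add_neg_cancel x
    rw [← this]
    nth_rewrite 1 [hc]
    nth_rewrite 1 [hc']
    rw [← Finset.sum_add_distrib]
    exact Finset.sum_congr rfl fun k _ => (add_smul _ _ _).symm
  have hall : ∀ j, (c j : ℝ) + (c' j : ℝ) = 0 := by
    have := Fintype.linearIndependent_iff.mp R.sroot_indep
      (fun j => (c j : ℝ) + (c' j : ℝ)) hzero.symm
    exact this
  have hx0 : x = 0 := by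
    rw [hc]
    refine Finset.sum_eq_zero fun j _ => ?_
    have h1 : (c j : ℝ) = 0 := by
      have h2 := hall j
      have h3 : (0:ℝ) ≤ (c j : ℝ) := Nat.cast_nonneg _
      have h4 : (0:ℝ) ≤ (c' j : ℝ) := Nat.cast_nonneg _
      linarith
    rw [h1, zero_smul]
  exact R.zero_not_mem (hx0 ▸ hxΔ)

lemma pos_or_neg {x : V} (hx : x ∈ R.Δ) : x ∈ R.pos ∨ -x ∈ R.pos := by
  rcases R.decomp x hx with ⟨c, hc⟩ | ⟨c, hc⟩
  · exact Or.inl ⟨hx, c, hc⟩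
  · exact Or.inr ⟨R.neg_mem x hx, c, by rw [hc, neg_neg]⟩

lemma pos_of_cf_pos {x : V} (hx : x ∈ R.Δ) {k : ι} (h : 0 < R.cf k x) : x ∈ R.pos := by
  rcases R.pos_or_neg hx with hp | hp
  · exact hp
  · exfalso
    have := R.cf_nonneg_of_pos hp k
    rw [map_neg] at this
    linarith

lemma sroot_pos (k : ι) : R.sroot k ∈ R.pos :=
  R.pos_of_cf_pos (R.sroot_mem k) (k := k) (by rw [R.cf_sroot_self]; norm_num)

/-- Height, as a linear functional. -/
noncomputable def htm : V →ₗ[ℝ] ℝ := ∑ k, R.cf k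

lemma htm_apply (x : V) : R.htm x = ∑ k, R.cf k x := by
  simp [htm, LinearMap.sum_apply]

lemma htm_sroot (k : ι) : R.htm (R.sroot k) = 1 := by
  rw [htm_apply]
  rw [Finset.sum_eq_single k (fun j _ hj => R.cf_sroot_ne (Ne.symm hj))
    (fun h => absurd (Finset.mem_univ k) h)]
  exact R.cf_sroot_self k

lemma one_le_htm_of_pos {x : V} (hx : x ∈ R.pos) : 1 ≤ R.htm x := by
  obtain ⟨hxΔ, c, hc⟩ := hx
  have hne : ∃ j, 1 ≤ c j := by
    by_contra hno
    push_neg at hno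
    have : ∀ j, c j = 0 := fun j => by have := hno j; omega
    have hx0 : x = 0 := by
      rw [hc]; exact Finset.sum_eq_zero fun j _ => by rw [this j]; simp
    exact R.zero_not_mem (hx0 ▸ hxΔ)
  obtain ⟨j, hj⟩ := hne
  rw [htm_apply]
  have h1 : (1:ℝ) ≤ (c j : ℝ) := by exact_mod_cast hj
  have h2 : (c j : ℝ) ≤ ∑ k, R.cf k x := by
    have : ∀ k ∈ Finset.univ, (0:ℝ) ≤ R.cf k x := fun k _ => R.cf_nonneg_of_pos ⟨hxΔ, c, hc⟩ k
    have := Finset.single_le_sum this (Finset.mem_univ j)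
    rwa [R.cf_coeffN hc j] at this
  linarith

lemma eq_sroot_of_htm_one {x : V} (hx : x ∈ R.pos) {i : ι} (hcf : R.cf i x = 1)
    (hht : R.htm x = 1) : x = R.sroot i := by
  classical
  have hnn : ∀ k, 0 ≤ R.cf k x := R.cf_nonneg_of_pos hx
  have hzero : ∀ k, k ≠ i → R.cf k x = 0 := by
    intro k hk
    by_contra hne
    have hklt : 0 < R.cf k x := lt_of_le_of_ne (hnn k) (Ne.symm hne)
    have : ∑ j, R.cf j x ≥ R.cf i x + R.cf k x := by
      have := Finset.add_sum_erase Finset.univ (fun j => R.cf j x) (Finset.mem_univ i)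
      have hk' : k ∈ Finset.univ.erase i := Finset.mem_erase.mpr ⟨hk, Finset.mem_univ k⟩
      have h2 : R.cf k x ≤ ∑ j ∈ Finset.univ.erase i, R.cf j x :=
        Finset.single_le_sum (fun j _ => hnn j) hk'
      linarith
    rw [← htm_apply, hht, hcf] at this
    linarith
  have := R.root_eq_sum_cf hx.1
  rw [Finset.sum_eq_single i (fun k _ hk => by rw [hzero k hk, zero_smul])
    (fun h => absurd (Finset.mem_univ i) h)] at this
  rw [this, hcf, one_smul]

end RSD
namespace RSD

variable {ι V : Type*} [Fintype ι] [NormedAddCommGroup V] [InnerProductSpace ℝ V]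
  (R : RSD ι V)

lemma norm_mul_norm_eq {a b : V} (hsl : R.SimplyLaced) (ha : a ∈ R.Δ) (hb : b ∈ R.Δ) :
    ‖a‖ * ‖b‖ = ⟪a, a⟫ := by
  have h1 : (‖a‖ * ‖b‖) ^ 2 = ⟪a, a⟫ * ⟪b, b⟫ := by
    rw [real_inner_self_eq_norm_sq, real_inner_self_eq_norm_sq]; ring
  have h2 : ⟪b, b⟫ = ⟪a, a⟫ := hsl b hb a ha
  have h3 : 0 < ⟪a, a⟫ := R.root_inner_self_pos ha
  have h4 : 0 ≤ ‖a‖ * ‖b‖ := mul_nonneg (norm_nonneg a) (norm_nonneg b)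
  have h5 : (‖a‖ * ‖b‖ - ⟪a, a⟫) * (‖a‖ * ‖b‖ + ⟪a, a⟫) = 0 := by
    have : (‖a‖ * ‖b‖) ^ 2 = ⟪a, a⟫ * ⟪a, a⟫ := by rw [h1, h2]
    nlinarith [this]
  rcases mul_eq_zero.mp h5 with h | h
  · linarith
  · linarith

lemma inner_abs_lt {a b : V} (hsl : R.SimplyLaced) (ha : a ∈ R.Δ) (hb : b ∈ R.Δ)
    (hne : a ≠ b) (hne' : a ≠ -b) : |⟪a, b⟫| < ⟪a, a⟫ := by
  have h1 : |⟪a, b⟫| ≤ ⟪a, a⟫ := by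
    have := abs_real_inner_le_norm a b
    rw [R.norm_mul_norm_eq hsl ha hb] at this
    exact this
  rcases lt_or_eq_of_le h1 with h | h
  · exact h
  · exfalso
    have h2 : ⟪b, b⟫ = ⟪a, a⟫ := hsl b hb a ha
    rcases (abs_eq (le_of_lt (R.root_inner_self_pos ha))).mp h with h3 | h3
    · apply hne
      have h4 : ⟪a - b, a - b⟫ = 0 := by
        rw [real_inner_sub_sub_self]
        linarith
      have h5 := (@inner_self_eq_zero ℝ _ _ _ _ (a - b)).mp h4
      exact sub_eq_zero.mp h5
    · apply hne'
      have h4 : ⟪a + b, a + b⟫ = 0 := by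
        rw [real_inner_add_add_self]
        linarith
      have h5 := (@inner_self_eq_zero ℝ _ _ _ _ (a + b)).mp h4
      exact eq_neg_of_add_eq_zero_left h5

lemma cartan {a b : V} (hsl : R.SimplyLaced) (ha : a ∈ R.Δ) (hb : b ∈ R.Δ)
    (hne : a ≠ b) (hne' : a ≠ -b) :
    2 * ⟪a, b⟫ / ⟪a, a⟫ = -1 ∨ 2 * ⟪a, b⟫ / ⟪a, a⟫ = 0 ∨ 2 * ⟪a, b⟫ / ⟪a, a⟫ = 1 := by
  obtain ⟨n, hn⟩ := R.crys a ha b hb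
  have hpos := R.root_inner_self_pos ha
  have habs := R.inner_abs_lt hsl ha hb hne hne'
  have hlt : |(n : ℝ)| < 2 := by
    rw [← hn, abs_div, abs_of_pos hpos, div_lt_iff₀ hpos, abs_mul]
    rw [abs_of_pos (by norm_num : (0:ℝ) < 2)]
    nlinarith [habs, abs_nonneg ⟪a,b⟫]
  have hn2 : -2 < (n:ℝ) ∧ (n:ℝ) < 2 := abs_lt.mp hlt
  have : -2 < n ∧ n < 2 := by exact_mod_cast hn2
  have hcases : n = -1 ∨ n = 0 ∨ n = 1 := by omega
  rcases hcases with h | h | h <;> rw [hn, h] <;> norm_num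

lemma cartan_sum {a b : V} (hsl : R.SimplyLaced) (ha : a ∈ R.Δ) (hb : b ∈ R.Δ)
    (hab : a + b ∈ R.Δ) : 2 * ⟪a, b⟫ / ⟪a, a⟫ = -1 := by
  have h1 : ⟪a + b, a + b⟫ = ⟪a, a⟫ := hsl _ hab a ha
  have h2 : ⟪b, b⟫ = ⟪a, a⟫ := hsl b hb a ha
  have h3 := real_inner_add_add_self a b
  have hpos := (R.root_inner_self_pos ha).ne'
  field_simp
  linarith

end RSD
namespace RSD

variable {ι V : Type*} [Fintype ι] [NormedAddCommGroup V] [InnerProductSpace ℝ V]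
  (R : RSD ι V)

lemma neg_sroot_not_pos (k : ι) : -R.sroot k ∉ R.pos :=
  fun h => R.not_pos_neg (R.sroot_pos k) h

/-- The simple reflection `s_k` permutes the positive roots other than `α_k`. -/
lemma reflect_pos_of_ne (hsl : R.SimplyLaced) {k : ι} {μ : V} (hμ : μ ∈ R.pos)
    (hne : μ ≠ R.sroot k) : R.reflect (R.sroot k) μ ∈ R.pos := by
  have hμΔ := hμ.1
  have hk := R.sroot_mem k
  have himg : R.reflect (R.sroot k) μ ∈ R.Δ := R.reflect_root_mem _ hk _ hμΔ
  by_cases hj : ∃ j, j ≠ k ∧ 0 < R.cf j μ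
  · obtain ⟨j, hjk, hjpos⟩ := hj
    apply R.pos_of_cf_pos himg (k := j)
    rw [R.reflect_apply _ hk μ, map_sub, map_smul, R.cf_sroot_ne (Ne.symm hjk)]
    simpa using hjpos
  · exfalso
    push_neg at hj
    have hzero : ∀ j, j ≠ k → R.cf j μ = 0 := fun j hjk =>
      le_antisymm (hj j hjk) (R.cf_nonneg_of_pos hμ j)
    have hμk : μ = R.cf k μ • R.sroot k := by
      have h0 := R.root_eq_sum_cf hμΔ
      rw [Finset.sum_eq_single k (fun j _ hj' => by rw [hzero j hj', zero_smul])
        (fun h => absurd (Finset.mem_univ k) h)] at h0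
      exact h0
    have hc0 : 0 < R.cf k μ := by
      rcases lt_or_eq_of_le (R.cf_nonneg_of_pos hμ k) with h | h
      · exact h
      · exfalso
        apply R.zero_not_mem
        have : μ = 0 := by rw [hμk, ← h, zero_smul]
        exact this ▸ hμΔ
    have hlen : ⟪μ, μ⟫ = ⟪R.sroot k, R.sroot k⟫ := hsl μ hμΔ _ hk
    have hμμ : ⟪μ, μ⟫ = R.cf k μ * R.cf k μ * ⟪R.sroot k, R.sroot k⟫ := by
      conv_lhs => rw [hμk]
      rw [real_inner_smul_left, real_inner_smul_right]
      ring
    have hℓ := R.root_inner_self_pos hk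
    have hcc : (R.cf k μ - 1) * (R.cf k μ + 1) = 0 := by
      have h7 : R.cf k μ * R.cf k μ * ⟪R.sroot k, R.sroot k⟫
          = 1 * ⟪R.sroot k, R.sroot k⟫ := by rw [← hμμ, hlen]; ring
      have h8 := mul_right_cancel₀ hℓ.ne' h7
      nlinarith [h8]
    have hc1 : R.cf k μ = 1 := by
      rcases mul_eq_zero.mp hcc with h | h
      · linarith
      · linarith
    exact hne (by rw [hμk, hc1, one_smul])

lemma exchange (hsl : R.SimplyLaced) : ∀ l : List ι, ∀ j : ι,
    -(R.wp l (R.sroot j)) ∈ R.pos →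
    ∃ l' : List ι, l'.length + 1 = l.length ∧
      R.wp l' = R.wp l * R.reflect (R.sroot j) := by
  intro l
  induction l with
  | nil =>
      intro j h
      rw [wp_nil, one_apply'] at h
      exact absurd h (R.neg_sroot_not_pos j)
  | cons k a ih =>
      intro j h
      by_cases hc : -(R.wp a (R.sroot j)) ∈ R.pos
      · obtain ⟨a', hlen, heq⟩ := ih j hc
        refine ⟨k :: a', by simp [← hlen], ?_⟩
        rw [wp_cons, wp_cons, heq, mul_assoc]
      · have hroot : R.wp a (R.sroot j) ∈ R.Δ := R.wp_root a (R.sroot_mem j)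
        have hpa : R.wp a (R.sroot j) ∈ R.pos := (R.pos_or_neg hroot).resolve_right hc
        have heqk : R.wp a (R.sroot j) = R.sroot k := by
          by_contra hne
          have hp := R.reflect_pos_of_ne hsl hpa hne
          apply R.not_pos_neg hp
          rw [wp_cons, mul_apply'] at h
          exact h
        refine ⟨a, by simp, ?_⟩
        have hconj := R.reflect_conj (R.wp_mem_W a) (R.sroot_mem j)
        rw [heqk] at hconj
        rw [wp_cons, hconj, mul_assoc, R.reflect_sq (R.sroot_mem j), mul_one]

lemma len_le_word {w : V ≃ₗ[ℝ] V} (l : List ι) (h : R.wp l = w) :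
    R.len w ≤ l.length :=
  Nat.sInf_le ⟨l, rfl, h⟩

lemma exists_min_word {w : V ≃ₗ[ℝ] V} (hw : w ∈ R.W) :
    ∃ l : List ι, l.length = R.len w ∧ R.wp l = w := by
  obtain ⟨l, hl⟩ := R.W_word hw
  have hne : {n | ∃ l : List ι, l.length = n ∧
      (l.map fun i => R.reflect (R.sroot i)).prod = w}.Nonempty :=
    ⟨l.length, l, rfl, hl⟩
  exact Nat.sInf_mem hne

lemma len_mul_reflect_lt (hsl : R.SimplyLaced) {w : V ≃ₗ[ℝ] V} (hw : w ∈ R.W) {j : ι}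
    (h : -(w (R.sroot j)) ∈ R.pos) :
    R.len (w * R.reflect (R.sroot j)) + 1 ≤ R.len w := by
  obtain ⟨l, hlen, hl⟩ := R.exists_min_word hw
  obtain ⟨l', hl'len, hl'⟩ := R.exchange hsl l j (by rw [hl]; exact h)
  rw [hl] at hl'
  have h1 := R.len_le_word l' hl'
  omega

lemma len_mul_reflect_le (k : ι) (w : V ≃ₗ[ℝ] V) (hw : w ∈ R.W) :
    R.len (w * R.reflect (R.sroot k)) ≤ R.len w + 1 := by
  obtain ⟨l, hlen, hl⟩ := R.exists_min_word hw
  have : R.wp (l.concat k) = w * R.reflect (R.sroot k) := by rw [wp_concat, hl]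
  have h1 := R.len_le_word _ this
  simp only [List.length_concat] at h1
  omega

lemma last_reflect (hsl : R.SimplyLaced) {w : V ≃ₗ[ℝ] V} (hw : w ∈ R.W)
    (h : R.len w ≠ 0) : ∃ k : ι, -(w (R.sroot k)) ∈ R.pos := by
  obtain ⟨l, hlen, hl⟩ := R.exists_min_word hw
  rcases List.eq_nil_or_concat l with rfl | ⟨a, k, rfl⟩
  · exact absurd (by simpa using hlen.symm) h
  refine ⟨k, ?_⟩
  by_contra hneg
  have hroot : w (R.sroot k) ∈ R.Δ := R.W_root hw (R.sroot_mem k)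
  have hpos : w (R.sroot k) ∈ R.pos := (R.pos_or_neg hroot).resolve_right hneg
  have hwa : R.wp a ∈ R.W := R.wp_mem_W a
  have hkey : -(R.wp a (R.sroot k)) ∈ R.pos := by
    have heq : w (R.sroot k) = -(R.wp a (R.sroot k)) := by
      rw [← hl, wp_concat, mul_apply', R.reflect_self (R.sroot_mem k), map_neg]
    rw [← heq]
    exact hpos
  have hlt := R.len_mul_reflect_lt hsl hwa hkey
  have heqw : R.wp a * R.reflect (R.sroot k) = w := by rw [← wp_concat, hl]
  rw [heqw] at hlt
  have h1 : R.len (R.wp a) ≤ a.length := R.len_le_word a rfl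
  have h2 : (a.concat k).length = R.len w := hlen
  simp only [List.length_concat] at h2
  omega

end RSD
namespace RSD

variable {ι V : Type*} [Fintype ι] [NormedAddCommGroup V] [InnerProductSpace ℝ V]
  (R : RSD ι V)

/-- Key height bound: a Weyl group element sending the positive root `δ` to the
simple root `α_i` has length at least `ht δ - 1`; at least `ht δ + 1` if `[δ:i] = 0`. -/
lemma heightBound (hsl : R.SimplyLaced) (i : ι) : ∀ n : ℕ, ∀ w ∈ R.W, R.len w = n →
    ∀ δ ∈ R.pos, w δ = R.sroot i →
    R.htm δ ≤ (n : ℝ) + 1 ∧ (R.cf i δ = 0 → R.htm δ + 2 ≤ (n : ℝ) + 1) := by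
  intro n
  induction n using Nat.strong_induction_on with | _ n ih =>
  intro w hw hlen δ hδ him
  obtain ⟨l, hllen, hl⟩ := R.exists_min_word hw
  rw [hlen] at hllen
  rcases List.eq_nil_or_concat l with rfl | ⟨a, k, rfl⟩
  · have hw1 : w = 1 := by rw [← hl]; rfl
    have hδα : δ = R.sroot i := by rw [← him, hw1, one_apply']
    constructor
    · rw [hδα, htm_sroot]
      have : (0:ℝ) ≤ (n:ℝ) := Nat.cast_nonneg n
      linarith
    · intro hcf
      rw [hδα, cf_sroot_self] at hcf
      exact absurd hcf one_ne_zero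
  · have hwz : w = R.wp a * R.reflect (R.sroot k) := by rw [← hl, wp_concat]
    have hl1 : a.length + 1 = n := by simpa using hllen
    have hz'le : R.len (R.wp a) ≤ a.length := R.len_le_word a rfl
    have hz'ge : n ≤ R.len (R.wp a) + 1 := by
      have h2 := R.len_mul_reflect_le k (R.wp a) (R.wp_mem_W a)
      rw [← hwz, hlen] at h2
      omega
    have hn1 : R.len (R.wp a) + 1 = n := by omega
    have hcast : ((R.len (R.wp a) : ℝ)) = (n:ℝ) - 1 := by
      have : ((R.len (R.wp a) + 1 : ℕ) : ℝ) = (n:ℝ) := by rw [hn1]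
      push_cast at this
      linarith
    by_cases hδk : δ = R.sroot k
    · have h1 : R.htm δ = 1 := by rw [hδk, htm_sroot]
      constructor
      · rw [h1]
        have : (0:ℝ) ≤ (n:ℝ) := Nat.cast_nonneg n
        linarith
      · intro hcf
        have hn1' : n ≠ 1 := by
          intro hone
          have ha0 : a.length = 0 := by omega
          have ha : a = [] := List.length_eq_zero_iff.mp ha0
          have hneg : w δ = -(R.sroot k) := by
            rw [hwz, ha, hδk, wp_nil, one_mul]
            exact R.reflect_self (R.sroot_mem k)
          rw [him] at hneg
          exact R.not_pos_neg (R.sroot_pos k) (by rw [← hneg]; exact R.sroot_pos i)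
        have hn2 : 2 ≤ n := by omega
        rw [h1]
        have : (2:ℝ) ≤ (n:ℝ) := by exact_mod_cast hn2
        linarith
    · have hδ'pos := R.reflect_pos_of_ne hsl hδ hδk
      have hδ' : R.reflect (R.sroot k) δ
          = δ - (2 * ⟪R.sroot k, δ⟫ / ⟪R.sroot k, R.sroot k⟫) • R.sroot k :=
        R.reflect_apply _ (R.sroot_mem k) δ
      have him' : R.wp a (R.reflect (R.sroot k) δ) = R.sroot i := by
        rw [← mul_apply', ← hwz, him]
      have hδmk : R.sroot k ≠ -δ := by
        intro hcontra
        apply R.not_pos_neg hδ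
        rw [← hcontra]
        exact R.sroot_pos k
      have hcart := R.cartan hsl (R.sroot_mem k) hδ.1 (Ne.symm hδk) hδmk
      have hIH := ih (R.len (R.wp a)) (by omega) (R.wp a) (R.wp_mem_W a) rfl _ hδ'pos him'
      have hht' : R.htm (R.reflect (R.sroot k) δ)
          = R.htm δ - 2 * ⟪R.sroot k, δ⟫ / ⟪R.sroot k, R.sroot k⟫ := by
        rw [hδ', map_sub, map_smul, htm_sroot, smul_eq_mul, mul_one]
      have hc1 : 2 * ⟪R.sroot k, δ⟫ / ⟪R.sroot k, R.sroot k⟫ ≤ 1 := by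
        rcases hcart with h | h | h <;> rw [h] <;> norm_num
      constructor
      · have h2 := hIH.1
        rw [hht', hcast] at h2
        linarith
      · intro hcf
        by_cases hki : k = i
        · subst hki
          have hcne1 : 2 * ⟪R.sroot k, δ⟫ / ⟪R.sroot k, R.sroot k⟫ ≠ 1 := by
            intro h1
            have hval : R.cf k (R.reflect (R.sroot k) δ) = -1 := by
              rw [hδ', map_sub, map_smul, cf_sroot_self, hcf, h1]
              norm_num
            have := R.cf_nonneg_of_pos hδ'pos k
            linarith
          rcases hcart with h | h | h
          · have h2 := hIH.1
            rw [hht', hcast, h] at h2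
            linarith
          · have hcf' : R.cf k (R.reflect (R.sroot k) δ) = 0 := by
              rw [hδ', map_sub, map_smul, cf_sroot_self, hcf, h]
              norm_num
            have h2 := hIH.2 hcf'
            rw [hht', hcast, h] at h2
            linarith
          · exact absurd h hcne1
        · have hcf' : R.cf i (R.reflect (R.sroot k) δ) = 0 := by
            rw [hδ', map_sub, map_smul, R.cf_sroot_ne hki, hcf]
            norm_num
          have h2 := hIH.2 hcf'
          rw [hht', hcast] at h2
          linarith

/-- Construction of an explicit word of length `ht γ - 1` carrying `γ` to `α_i`. -/
lemma chainExists (hsl : R.SimplyLaced) (i : ι) : ∀ n : ℕ, ∀ γ ∈ R.pos, R.cf i γ = 1 →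
    R.htm γ = (n : ℝ) → ∃ l : List ι, l.length + 1 = n ∧ R.wp l γ = R.sroot i := by
  classical
  intro n
  induction n using Nat.strong_induction_on with | _ n ih =>
  intro γ hγ hcf hht
  have hge1 : 1 ≤ R.htm γ := R.one_le_htm_of_pos hγ
  have hn1 : 1 ≤ n := by
    by_contra hn
    have : n = 0 := by omega
    rw [this] at hht
    rw [hht] at hge1
    norm_num at hge1
  by_cases hone : n = 1
  · have hγα : γ = R.sroot i := R.eq_sroot_of_htm_one hγ hcf (by rw [hht, hone]; norm_num)
    exact ⟨[], by simp [hone], by rw [wp_nil, one_apply', hγα]⟩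
  · have hn2 : 2 ≤ n := by omega
    have hγi : γ ≠ R.sroot i := by
      intro hcontra
      rw [hcontra, htm_sroot] at hht
      have : (n:ℝ) ≥ 2 := by exact_mod_cast hn2
      linarith
    -- find j ≠ i with positive inner product
    have hexj : ∃ j, j ≠ i ∧ 0 < ⟪R.sroot j, γ⟫ := by
      by_contra hno
      push_neg at hno
      have hγγ : ⟪γ, γ⟫ = ∑ j, R.cf j γ * ⟪R.sroot j, γ⟫ := by
        nth_rewrite 1 [R.root_eq_sum_cf hγ.1]
        rw [sum_inner]
        exact Finset.sum_congr rfl fun j _ => real_inner_smul_left _ _ _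
      have hγmi : R.sroot i ≠ -γ := by
        intro hcontra
        apply R.not_pos_neg hγ
        rw [← hcontra]; exact R.sroot_pos i
      have hcart := R.cartan hsl (R.sroot_mem i) hγ.1 (fun h => hγi h.symm) hγmi
      have hL := R.root_inner_self_pos hγ.1
      have hhalf : ⟪R.sroot i, γ⟫ ≤ ⟪γ, γ⟫ / 2 := by
        have hsli : ⟪R.sroot i, R.sroot i⟫ = ⟪γ, γ⟫ := hsl _ (R.sroot_mem i) _ hγ.1
        rcases hcart with h | h | h <;>
          · rw [hsli, div_eq_iff hL.ne'] at h
            linarith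
      have hsum1 : ∑ j ∈ Finset.univ.erase i, R.cf j γ * ⟪R.sroot j, γ⟫ ≤ 0 :=
        Finset.sum_nonpos fun j hj =>
          mul_nonpos_of_nonneg_of_nonpos (R.cf_nonneg_of_pos hγ j)
            (hno j (Finset.mem_erase.mp hj).1)
      have hsum2 : ⟪γ, γ⟫ ≤ ⟪R.sroot i, γ⟫ := by
        rw [hγγ, ← Finset.add_sum_erase _ _ (Finset.mem_univ i), hcf, one_mul]
        linarith
      linarith
    obtain ⟨j, hji, hjpos⟩ := hexj
    have hγj : γ ≠ R.sroot j := by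
      intro hcontra
      rw [hcontra, R.cf_sroot_ne hji] at hcf
      norm_num at hcf
    have hγmj : R.sroot j ≠ -γ := by
      intro hcontra
      apply R.not_pos_neg hγ
      rw [← hcontra]; exact R.sroot_pos j
    have hcart := R.cartan hsl (R.sroot_mem j) hγ.1 (Ne.symm hγj) hγmj
    have hc1 : 2 * ⟪R.sroot j, γ⟫ / ⟪R.sroot j, R.sroot j⟫ = 1 := by
      have hjj := R.root_inner_self_pos (R.sroot_mem j)
      rcases hcart with h | h | h
      · exfalso
        have : 2 * ⟪R.sroot j, γ⟫ / ⟪R.sroot j, R.sroot j⟫ > 0 := by positivity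
        linarith
      · exfalso
        have : 2 * ⟪R.sroot j, γ⟫ / ⟪R.sroot j, R.sroot j⟫ > 0 := by positivity
        linarith
      · exact h
    have hγ' : R.reflect (R.sroot j) γ = γ - R.sroot j := by
      rw [R.reflect_apply _ (R.sroot_mem j) γ, hc1, one_smul]
    have hγ'Δ : γ - R.sroot j ∈ R.Δ := by
      rw [← hγ']
      exact R.reflect_root_mem _ (R.sroot_mem j) _ hγ.1
    have hcf' : R.cf i (γ - R.sroot j) = 1 := by
      rw [map_sub, R.cf_sroot_ne hji, hcf, sub_zero]
    have hγ'pos : γ - R.sroot j ∈ R.pos :=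
      R.pos_of_cf_pos hγ'Δ (k := i) (by rw [hcf']; norm_num)
    have hht' : R.htm (γ - R.sroot j) = ((n - 1 : ℕ) : ℝ) := by
      rw [map_sub, htm_sroot, hht]
      have : ((n - 1 : ℕ) : ℝ) = (n : ℝ) - 1 := by
        have : ((n - 1 + 1 : ℕ) : ℝ) = (n : ℝ) := by rw [Nat.sub_add_cancel hn1]
        push_cast at this
        linarith
      rw [this]
    obtain ⟨l', hl'len, hl'⟩ := ih (n-1) (by omega) _ hγ'pos hcf' hht'
    refine ⟨l'.concat j, ?_, ?_⟩
    · simp only [List.length_concat]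
      omega
    · rw [wp_concat, mul_apply', hγ', hl']

end RSD
namespace RSD

variable {ι V : Type*} [Fintype ι] [NormedAddCommGroup V] [InnerProductSpace ℝ V]
  (R : RSD ι V)

lemma N_insert (hsl : R.SimplyLaced) {w : V ≃ₗ[ℝ] V} (hw : w ∈ R.W) {k : ι}
    (h : -(w (R.sroot k)) ∈ R.pos) :
    R.N w = insert (R.sroot k)
      ((fun x => R.reflect (R.sroot k) x) '' R.N (w * R.reflect (R.sroot k))) := by
  ext μ
  simp only [N, Set.mem_insert_iff, Set.mem_image, Set.mem_setOf_eq]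
  constructor
  · rintro ⟨hμpos, hμneg⟩
    by_cases hμk : μ = R.sroot k
    · exact Or.inl hμk
    · refine Or.inr ⟨R.reflect (R.sroot k) μ,
        ⟨R.reflect_pos_of_ne hsl hμpos hμk, ?_⟩, R.reflect_reflect (R.sroot_mem k) μ⟩
      rw [mul_apply', R.reflect_reflect (R.sroot_mem k)]
      exact hμneg
  · rintro (rfl | ⟨ν, ⟨hνpos, hνneg⟩, rfl⟩)
    · exact ⟨R.sroot_pos k, h⟩
    · rw [mul_apply'] at hνneg
      have hνk : ν ≠ R.sroot k := by
        intro hcontra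
        rw [hcontra, R.reflect_self (R.sroot_mem k), map_neg, neg_neg] at hνneg
        exact R.not_pos_neg hνneg h
      exact ⟨R.reflect_pos_of_ne hsl hνpos hνk, hνneg⟩

lemma S_insert (hsl : R.SimplyLaced) {γ : V} {k i : ι} (hki : k ≠ i) (hγ : γ ∈ R.pos)
    (hcf : R.cf i γ = 1)
    (hc : 2 * ⟪R.sroot k, γ⟫ / ⟪R.sroot k, R.sroot k⟫ = 1)
    (hγ' : γ - R.sroot k ∈ R.pos) :
    {μ : V | μ ∈ R.pos ∧ R.cf i μ = 0 ∧ γ - μ ∈ R.pos}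
    = insert (R.sroot k) ((fun x => R.reflect (R.sroot k) x) ''
        {μ : V | μ ∈ R.pos ∧ R.cf i μ = 0 ∧ (γ - R.sroot k) - μ ∈ R.pos}) := by
  have hkΔ := R.sroot_mem k
  have hrk : R.reflect (R.sroot k) γ = γ - R.sroot k := by
    rw [R.reflect_apply _ hkΔ γ, hc, one_smul]
  have hback : R.reflect (R.sroot k) (γ - R.sroot k) = γ := by
    rw [← hrk, R.reflect_reflect hkΔ]
  have cfr : ∀ x : V, R.cf i (R.reflect (R.sroot k) x) = R.cf i x := by
    intro x
    rw [R.reflect_apply _ hkΔ x, map_sub, map_smul, R.cf_sroot_ne hki, smul_eq_mul,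
      mul_zero, sub_zero]
  have hcfsk : R.cf i (R.sroot k) = 0 := R.cf_sroot_ne hki
  ext μ
  simp only [Set.mem_insert_iff, Set.mem_image, Set.mem_setOf_eq]
  constructor
  · rintro ⟨hμpos, hμcf, hγμpos⟩
    by_cases hμk : μ = R.sroot k
    · exact Or.inl hμk
    · refine Or.inr ⟨R.reflect (R.sroot k) μ,
        ⟨R.reflect_pos_of_ne hsl hμpos hμk, by rw [cfr]; exact hμcf, ?_⟩,
        R.reflect_reflect hkΔ μ⟩
      have heq : (γ - R.sroot k) - R.reflect (R.sroot k) μ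
          = R.reflect (R.sroot k) (γ - μ) := by
        rw [map_sub, hrk]
      rw [heq]
      refine R.reflect_pos_of_ne hsl hγμpos ?_
      intro hcontra
      have : R.cf i (γ - μ) = 0 := by rw [hcontra]; exact hcfsk
      rw [map_sub, hcf, hμcf, sub_zero] at this
      exact one_ne_zero this
  · rintro (rfl | ⟨ν, ⟨hνpos, hνcf, hν'⟩, rfl⟩)
    · exact ⟨R.sroot_pos k, hcfsk, hγ'⟩
    · have hνk : ν ≠ R.sroot k := by
        intro hcontra
        subst hcontra
        -- γ - 2 α_k would be a root : length contradiction
        have hx : γ - R.sroot k - R.sroot k ∈ R.pos := hν'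
        have hxeq : γ - R.sroot k - R.sroot k = γ - (2:ℝ) • R.sroot k := by
          rw [two_smul]; abel
        have hL := R.root_inner_self_pos hkΔ
        have hGL : ⟪γ, γ⟫ = ⟪R.sroot k, R.sroot k⟫ := hsl γ hγ.1 _ hkΔ
        have hXL : ⟪γ - (2:ℝ) • R.sroot k, γ - (2:ℝ) • R.sroot k⟫
            = ⟪R.sroot k, R.sroot k⟫ := by
          rw [← hxeq]; exact hsl _ hx.1 _ hkΔ
        have hik : 2 * ⟪R.sroot k, γ⟫ = ⟪R.sroot k, R.sroot k⟫ := by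
          have := (div_eq_iff hL.ne').mp hc
          linarith
        have hexp := real_inner_sub_sub_self γ ((2:ℝ) • R.sroot k)
        rw [real_inner_smul_right, real_inner_smul_left, real_inner_smul_right,
          real_inner_comm (R.sroot k) γ] at hexp
        rw [hexp, hGL] at hXL
        linarith
      refine ⟨R.reflect_pos_of_ne hsl hνpos hνk, by rw [cfr]; exact hνcf, ?_⟩
      have heq : γ - R.reflect (R.sroot k) ν = R.reflect (R.sroot k) ((γ - R.sroot k) - ν) := by
        rw [map_sub, hback]
      rw [heq]
      refine R.reflect_pos_of_ne hsl hν' ?_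
      intro hcontra
      have : R.cf i ((γ - R.sroot k) - ν) = 0 := by rw [hcontra]; exact hcfsk
      rw [map_sub, map_sub, hcf, hcfsk, hνcf, sub_zero, sub_zero] at this
      exact one_ne_zero this

lemma mainAux (hsl : R.SimplyLaced) (i : ι) : ∀ h : ℕ, ∀ γ ∈ R.pos, R.cf i γ = 1 →
    R.htm γ = (h : ℝ) → ∀ w ∈ R.W, w γ = R.sroot i →
    (∀ w' ∈ R.W, w' γ = R.sroot i → R.len w ≤ R.len w') →
    R.N w = {μ : V | μ ∈ R.pos ∧ R.cf i μ = 0 ∧ γ - μ ∈ R.pos} := by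
  intro h
  induction h using Nat.strong_induction_on with | _ h ih =>
  intro γ hγ hcf hht w hw hwγ hmin
  obtain ⟨l0, hl0len, hl0⟩ := R.chainExists hsl i h γ hγ hcf hht
  have hup : R.len w + 1 ≤ h := by
    have h1 : R.len w ≤ R.len (R.wp l0) := hmin _ (R.wp_mem_W l0) hl0
    have h2 : R.len (R.wp l0) ≤ l0.length := R.len_le_word l0 rfl
    omega
  have hlowR : (h:ℝ) ≤ (R.len w : ℝ) + 1 := by
    have hb := (R.heightBound hsl i (R.len w) w hw rfl γ hγ hwγ).1
    rw [hht] at hb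
    exact hb
  have hlow : h ≤ R.len w + 1 := by exact_mod_cast hlowR
  have hlen : R.len w + 1 = h := by omega
  by_cases hone : h = 1
  · have hw0 : R.len w = 0 := by omega
    obtain ⟨l, hllen, hl⟩ := R.exists_min_word hw
    rw [hw0] at hllen
    have hlnil : l = [] := List.length_eq_zero_iff.mp hllen
    have hw1 : w = 1 := by rw [← hl, hlnil, wp_nil]
    ext μ
    simp only [N, Set.mem_setOf_eq]
    constructor
    · rintro ⟨h1, h2⟩
      rw [hw1, one_apply'] at h2
      exact (R.not_pos_neg h1 h2).elim
    · rintro ⟨h1, h2, h3⟩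
      exfalso
      have e1 := R.one_le_htm_of_pos h1
      have e2 := R.one_le_htm_of_pos h3
      have e3 : R.htm (γ - μ) = (1:ℝ) - R.htm μ := by
        rw [map_sub, hht, hone]
        norm_num
      linarith
  · have h2le : 2 ≤ h := by omega
    have hlw1 : R.len w ≠ 0 := by omega
    obtain ⟨k, hk⟩ := R.last_reflect hsl hw hlw1
    have hskW : R.reflect (R.sroot k) ∈ R.W := R.sreflect_mem_W k
    have hw' : w * R.reflect (R.sroot k) ∈ R.W := mul_mem hw hskW
    have hlt := R.len_mul_reflect_lt hsl hw hk
    have hγk : γ ≠ R.sroot k := by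
      intro hcontra
      apply R.not_pos_neg (R.sroot_pos i)
      rw [← hwγ, hcontra]
      exact hk
    have hγmk : R.sroot k ≠ -γ := fun hcontra =>
      R.not_pos_neg hγ (by rw [← hcontra]; exact R.sroot_pos k)
    have hcart := R.cartan hsl (R.sroot_mem k) hγ.1 (Ne.symm hγk) hγmk
    have hskγ : R.reflect (R.sroot k) γ
        = γ - (2 * ⟪R.sroot k, γ⟫ / ⟪R.sroot k, R.sroot k⟫) • R.sroot k :=
      R.reflect_apply _ (R.sroot_mem k) γ
    have hws : ∀ x : V, (w * R.reflect (R.sroot k)) (R.reflect (R.sroot k) x) = w x :=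
      fun x => by rw [mul_apply', R.reflect_reflect (R.sroot_mem k)]
    have e1 : (R.len (w * R.reflect (R.sroot k)) : ℝ) + 1 ≤ (R.len w : ℝ) := by
      exact_mod_cast hlt
    have e2 : ((R.len w : ℝ)) + 1 = (h:ℝ) := by exact_mod_cast hlen
    rcases hcart with hc | hc | hc
    · exfalso
      have hγ'eq : R.reflect (R.sroot k) γ = γ + R.sroot k := by
        rw [hskγ, hc, neg_smul, one_smul, sub_neg_eq_add]
      have hγ'Δ : R.reflect (R.sroot k) γ ∈ R.Δ :=
        R.reflect_root_mem _ (R.sroot_mem k) _ hγ.1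
      have hγ'cf : 0 < R.cf i (R.reflect (R.sroot k) γ) := by
        rw [hγ'eq, map_add, hcf]
        have := R.cf_nonneg_of_pos (R.sroot_pos k) i
        linarith
      have hγ'pos : R.reflect (R.sroot k) γ ∈ R.pos := R.pos_of_cf_pos hγ'Δ hγ'cf
      have him' : (w * R.reflect (R.sroot k)) (R.reflect (R.sroot k) γ) = R.sroot i := by
        rw [hws, hwγ]
      have hH := (R.heightBound hsl i (R.len (w * R.reflect (R.sroot k))) _ hw' rfl _
        hγ'pos him').1
      have hhtγ' : R.htm (R.reflect (R.sroot k) γ) = (h:ℝ) + 1 := by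
        rw [hγ'eq, map_add, htm_sroot, hht]
      rw [hhtγ'] at hH
      linarith
    · exfalso
      have hγfix : R.reflect (R.sroot k) γ = γ := by rw [hskγ, hc, zero_smul, sub_zero]
      have him' : (w * R.reflect (R.sroot k)) γ = R.sroot i := by
        rw [mul_apply', hγfix, hwγ]
      have := hmin _ hw' him'
      omega
    · have hγ'eq : R.reflect (R.sroot k) γ = γ - R.sroot k := by rw [hskγ, hc, one_smul]
      have hγ'Δ : γ - R.sroot k ∈ R.Δ := by
        rw [← hγ'eq]; exact R.reflect_root_mem _ (R.sroot_mem k) _ hγ.1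
      have hhtγ' : R.htm (γ - R.sroot k) = (h:ℝ) - 1 := by
        rw [map_sub, htm_sroot, hht]
      have him' : (w * R.reflect (R.sroot k)) (γ - R.sroot k) = R.sroot i := by
        rw [← hγ'eq, hws, hwγ]
      by_cases hki : k = i
      · exfalso
        subst hki
        have hcf' : R.cf k (γ - R.sroot k) = 0 := by
          rw [map_sub, cf_sroot_self, hcf]; ring
        have hγ'pos : γ - R.sroot k ∈ R.pos := by
          rcases R.pos_or_neg hγ'Δ with hp | hp
          · exact hp
          · exfalso
            have e3 := R.one_le_htm_of_pos hp
            rw [map_neg, hhtγ'] at e3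
            have e4 : (2:ℝ) ≤ (h:ℝ) := by exact_mod_cast h2le
            linarith
        have hH := (R.heightBound hsl k (R.len (w * R.reflect (R.sroot k))) _ hw' rfl _
          hγ'pos him').2 hcf'
        rw [hhtγ'] at hH
        linarith
      · have hcf' : R.cf i (γ - R.sroot k) = 1 := by
          rw [map_sub, R.cf_sroot_ne hki, hcf, sub_zero]
        have hγ'pos : γ - R.sroot k ∈ R.pos :=
          R.pos_of_cf_pos hγ'Δ (k := i) (by rw [hcf']; norm_num)
        have hht'' : R.htm (γ - R.sroot k) = ((h - 1 : ℕ) : ℝ) := by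
          rw [hhtγ']
          have e5 : ((h - 1 + 1 : ℕ):ℝ) = (h:ℝ) := by rw [Nat.sub_add_cancel (by omega)]
          push_cast at e5
          linarith
        have hmin' : ∀ z ∈ R.W, z (γ - R.sroot k) = R.sroot i →
            R.len (w * R.reflect (R.sroot k)) ≤ R.len z := by
          intro z hz hzγ
          have hHz := (R.heightBound hsl i (R.len z) z hz rfl _ hγ'pos hzγ).1
          rw [hhtγ'] at hHz
          have e4 : h ≤ R.len z + 2 := by
            exact_mod_cast (by linarith : (h:ℝ) ≤ (R.len z:ℝ) + 2)
          omega
        have hIH := ih (h-1) (by omega) _ hγ'pos hcf' hht'' _ hw' him' hmin'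
        rw [R.N_insert hsl hw hk, hIH, ← R.S_insert hsl hki hγ hcf hc hγ'pos]

end RSD
/-- In the simply-laced case, if `γ ≽ α` with `[γ:α] = 1` (`α` simple),
then `N(w_{γ,α}) = {μ ∈ Δ⁺ ∣ [μ:α] = 0 ∧ γ - μ ∈ Δ⁺}`. -/
theorem inversion_set_for_alpha_height_one
    {ι V : Type*} [Fintype ι] [NormedAddCommGroup V] [InnerProductSpace ℝ V]
    (R : RSD ι V) (hsl : R.SimplyLaced) (i : ι) (γ : V) (hγ : γ ∈ R.pos)
    (hle : R.le (R.sroot i) γ)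
    (hcoef : ∀ c : ι → ℕ, γ = ∑ k, (c k : ℝ) • R.sroot k → c i = 1)
    (w : V ≃ₗ[ℝ] V) (hw : w ∈ R.W) (hwγ : w γ = R.sroot i)
    (hmin : ∀ w' ∈ R.W, w' γ = R.sroot i → R.len w ≤ R.len w') :
    R.N w = {μ ∈ R.pos |
      (∀ c : ι → ℕ, μ = ∑ k, (c k : ℝ) • R.sroot k → c i = 0) ∧ γ - μ ∈ R.pos} := by
  obtain ⟨c₀, hdec⟩ := hγ.2
  have hcf : R.cf i γ = 1 := by
    rw [R.cf_coeffN hdec i]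
    exact_mod_cast hcoef c₀ hdec
  have hht : R.htm γ = ((∑ k, c₀ k : ℕ) : ℝ) := by
    rw [RSD.htm_apply]
    rw [Finset.sum_congr rfl fun k _ => R.cf_coeffN hdec k]
    push_cast
    rfl
  have hmain := R.mainAux hsl i (∑ k, c₀ k) γ hγ hcf hht w hw hwγ hmin
  rw [hmain]
  ext μ
  simp only [Set.mem_setOf_eq, Set.mem_sep_iff]
  constructor
  · rintro ⟨h1, h2, h3⟩
    refine ⟨h1, fun c hc => ?_, h3⟩
    have hcc := R.cf_coeffN hc i
    rw [h2] at hcc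
    exact_mod_cast hcc.symm
  · rintro ⟨h1, h2, h3⟩
    refine ⟨h1, ?_, h3⟩
    obtain ⟨c₁, hc₁⟩ := h1.2
    rw [R.cf_coeffN hc₁ i, h2 c₁ hc₁]
    norm_num
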